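/- Let G ⊆ (𝔽₂)^{2n} be a maximal pairwise anticommuting set with |G| = 2m+1 ≥ 3, and let J ⊆ G with |J| = 3. Then (G \ J) ∪ {sum of J} is again a maximal pairwise anticommuting set, of cardinality 2m−1. -/
import Mathlib


/-- The phase space `(𝔽₂)^{2n}`, modeled as pairs of vectors in `𝔽₂ⁿ`. -/
abbrev V (n : ℕ) := (Fin n → ZMod 2) × (Fin n → ZMod 2)

/-- The standard symplectic bilinear form `ω((a,b),(c,d)) = a·d + b·c`. -/
def sympl {n : ℕ} (P Q : V n) : ZMod 2 :=
  ∑ i, (P.1 i * Q.2 i + P.2 i * Q.1 i)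

/-- A finite set is (pairwise) anticommuting if `ω(P,Q) = 1` for all distinct `P, Q`. -/
def AC {n : ℕ} (G : Finset (V n)) : Prop :=
  ∀ P ∈ G, ∀ Q ∈ G, P ≠ Q → sympl P Q = 1

/-- A maximal pairwise anticommuting set: no strictly larger set is anticommuting. -/
def MaxAC {n : ℕ} (G : Finset (V n)) : Prop :=
  AC G ∧ ∀ H : Finset (V n), G ⊆ H → AC H → H = G

lemma sympl_comm {n : ℕ} (P Q : V n) : sympl P Q = sympl Q P := by
  simp only [sympl]
  exact Finset.sum_congr rfl fun i _ => by ring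

lemma sympl_self {n : ℕ} (P : V n) : sympl P P = 0 := by
  simp only [sympl]
  refine Finset.sum_eq_zero fun i _ => ?_
  rw [mul_comm (P.2 i) (P.1 i)]
  exact CharTwo.add_self_eq_zero _

lemma sympl_add_left {n : ℕ} (P Q R : V n) :
    sympl (P + Q) R = sympl P R + sympl Q R := by
  simp only [sympl, Prod.fst_add, Prod.snd_add, Pi.add_apply, add_mul]
  rw [← Finset.sum_add_distrib]
  exact Finset.sum_congr rfl fun i _ => by ring

lemma sympl_add_right {n : ℕ} (P Q R : V n) :
    sympl P (Q + R) = sympl P Q + sympl P R := by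
  rw [sympl_comm, sympl_add_left, sympl_comm Q, sympl_comm R]

lemma sympl_smul_left {n : ℕ} (c : ZMod 2) (P Q : V n) :
    sympl (c • P) Q = c * sympl P Q := by
  simp only [sympl, Prod.smul_fst, Prod.smul_snd, Pi.smul_apply, smul_eq_mul,
    Finset.mul_sum]
  exact Finset.sum_congr rfl fun i _ => by ring

lemma zmod2_case_a : ∀ x y z : ZMod 2, x + y + z = 1 →
    x + ((1 + x) * 0 + ((1 + y) * 1 + (1 + z) * 1)) = 1 := by decide

lemma zmod2_case_b : ∀ x y z : ZMod 2, x + y + z = 1 →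
    y + ((1 + x) * 1 + ((1 + y) * 0 + (1 + z) * 1)) = 1 := by decide

lemma zmod2_case_c : ∀ x y z : ZMod 2, x + y + z = 1 →
    z + ((1 + x) * 1 + ((1 + y) * 1 + (1 + z) * 0)) = 1 := by decide

lemma zmod2_case_out : ∀ x y z : ZMod 2, x + y + z = 1 →
    1 + ((1 + x) * 1 + ((1 + y) * 1 + (1 + z) * 1)) = 1 := by decide

/-- If some `R` anticommutes with every element of a maximal AC set, contradiction. -/
lemma maxac_no_ext {n : ℕ} {G : Finset (V n)} (hG : MaxAC G) (R : V n)
    (hR : ∀ y ∈ G, sympl R y = 1) : False := by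
  have hRG : R ∈ G := by
    have hAC : AC (insert R G) := by
      intro P hP Q hQ hPQ
      rcases Finset.mem_insert.1 hP with hP' | hP' <;>
        rcases Finset.mem_insert.1 hQ with hQ' | hQ'
      · exact absurd (hP'.trans hQ'.symm) hPQ
      · rw [hP']; exact hR Q hQ'
      · rw [hQ', sympl_comm]; exact hR P hP'
      · exact hG.1 P hP' Q hQ' hPQ
    have := hG.2 (insert R G) (Finset.subset_insert _ _) hAC
    rw [← this]; exact Finset.mem_insert_self _ _
  have h0 := hR R hRG
  rw [sympl_self] at h0
  exact absurd h0 (by decide)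

theorem stmt_13 {n m : ℕ} (G J : Finset (V n)) (hG : MaxAC G)
    (hcard : G.card = 2 * m + 1) (hm : 1 ≤ m) (hJG : J ⊆ G) (hJ : J.card = 3) :
    MaxAC (insert (∑ x ∈ J, x) (G \ J)) ∧
      (insert (∑ x ∈ J, x) (G \ J)).card = 2 * m - 1 := by
  obtain ⟨a, b, c, hab, hac, hbc, hJabc⟩ := Finset.card_eq_three.mp hJ
  have haJ : a ∈ J := by rw [hJabc]; simp
  have hbJ : b ∈ J := by rw [hJabc]; simp
  have hcJ : c ∈ J := by rw [hJabc]; simp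
  have haG := hJG haJ
  have hbG := hJG hbJ
  have hcG := hJG hcJ
  have hS : ∑ x ∈ J, x = a + b + c := by
    rw [hJabc, Finset.sum_insert (by simp [hab, hac]),
      Finset.sum_insert (by simp [hbc]), Finset.sum_singleton, add_assoc]
  have hsab : sympl a b = 1 := hG.1 a haG b hbG hab
  have hsac : sympl a c = 1 := hG.1 a haG c hcG hac
  have hsbc : sympl b c = 1 := hG.1 b hbG c hcG hbc
  have hSnotin : (∑ x ∈ J, x) ∉ G \ J := by
    rw [hS]
    intro hmem
    obtain ⟨hSG, hSJ⟩ := Finset.mem_sdiff.1 hmem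
    have hne : a ≠ a + b + c := fun h => hSJ (h ▸ haJ)
    have h1 := hG.1 a haG _ hSG hne
    rw [sympl_add_right, sympl_add_right, sympl_self, hsab, hsac] at h1
    exact absurd h1 (by decide)
  -- the new set is anticommuting
  have key0 : ∀ y ∈ G \ J, sympl (∑ x ∈ J, x) y = 1 := by
    intro y hy
    obtain ⟨hyG, hyJ⟩ := Finset.mem_sdiff.1 hy
    have ha' : sympl a y = 1 := hG.1 a haG y hyG (fun h => hyJ (h ▸ haJ))
    have hb' : sympl b y = 1 := hG.1 b hbG y hyG (fun h => hyJ (h ▸ hbJ))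
    have hc' : sympl c y = 1 := hG.1 c hcG y hyG (fun h => hyJ (h ▸ hcJ))
    rw [hS, sympl_add_left, sympl_add_left, ha', hb', hc']
    decide
  have hAC' : AC (insert (∑ x ∈ J, x) (G \ J)) := by
    intro P hP Q hQ hPQ
    rcases Finset.mem_insert.1 hP with hP' | hP' <;>
      rcases Finset.mem_insert.1 hQ with hQ' | hQ'
    · exact absurd (hP'.trans hQ'.symm) hPQ
    · rw [hP']; exact key0 Q hQ'
    · rw [hQ', sympl_comm]; exact key0 P hP'
    · obtain ⟨hPG, _⟩ := Finset.mem_sdiff.1 hP'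
      obtain ⟨hQG, _⟩ := Finset.mem_sdiff.1 hQ'
      exact hG.1 P hPG Q hQG hPQ
  refine ⟨⟨hAC', ?_⟩, ?_⟩
  · -- maximality
    intro H hsub hACH
    refine Finset.Subset.antisymm ?_ hsub
    intro R hR
    by_contra hRG'
    -- R anticommutes with the sum and with everything in G \ J
    have hRS : sympl R (a + b + c) = 1 := by
      rw [← hS]
      refine hACH R hR _ (hsub (Finset.mem_insert_self _ _)) ?_
      intro h; exact hRG' (h ▸ Finset.mem_insert_self _ _)
    have hRy : ∀ y ∈ G \ J, sympl R y = 1 := by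
      intro y hy
      have hyH : y ∈ H := hsub (Finset.mem_insert_of_mem hy)
      refine hACH R hR y hyH ?_
      intro h; exact hRG' (h ▸ Finset.mem_insert_of_mem hy)
    have hsum : sympl R a + sympl R b + sympl R c = 1 := by
      rw [← sympl_add_right, ← sympl_add_right]; exact hRS
    have key : ∀ y ∈ G,
        sympl (R + ((1 + sympl R a) • a +
          ((1 + sympl R b) • b + (1 + sympl R c) • c))) y = 1 := by
      intro y hy
      simp only [sympl_add_left, sympl_smul_left]
      by_cases hyJ : y ∈ J
      · rw [hJabc] at hyJ
        simp only [Finset.mem_insert, Finset.mem_singleton] at hyJ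
        rcases hyJ with rfl | rfl | rfl
        · rw [sympl_self, sympl_comm b, hsab, sympl_comm c, hsac]
          exact zmod2_case_a _ _ _ hsum
        · rw [sympl_self, hsab, sympl_comm c, hsbc]
          exact zmod2_case_b _ _ _ hsum
        · rw [sympl_self, hsac, hsbc]
          exact zmod2_case_c _ _ _ hsum
      · have ha' : sympl a y = 1 := hG.1 a haG y hy (fun h => hyJ (h ▸ haJ))
        have hb' : sympl b y = 1 := hG.1 b hbG y hy (fun h => hyJ (h ▸ hbJ))
        have hc' : sympl c y = 1 := hG.1 c hcG y hy (fun h => hyJ (h ▸ hcJ))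
        have hRy' : sympl R y = 1 := hRy y (Finset.mem_sdiff.2 ⟨hy, hyJ⟩)
        rw [ha', hb', hc', hRy']
        exact zmod2_case_out _ _ _ hsum
    exact absurd (maxac_no_ext hG _ key) not_false
  · -- cardinality
    rw [Finset.card_insert_of_notMem hSnotin, Finset.card_sdiff_of_subset hJG, hcard, hJ]
    omega
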